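/- Let a < 0 and p < 0. The surface X(u,v) = (v, p·e^{-2√(-2a)u} + u + √(-a/2)·v²/2, p·e^{-2√(-2a)u} - u + √(-a/2)·v²/2) is not a ruled surface: there is no local reparametrization X = c(τ) + s·n(τ) with curves c, n : ℝ → ℝ³ and n(τ) ≠ 0. -/

import Mathlib

/-- For `a < 0`, `p < 0`, the surface
`X(u,v) = (v, p·e^{-2√(-2a)u} + u + √(-a/2)v²/2, p·e^{-2√(-2a)u} - u + √(-a/2)v²/2)` is not
a ruled surface: it admits no local representation `X = c(τ) + s·n(τ)` with a nowhere
vanishing director curve `n`. -/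
theorem stmt18 (a p : ℝ) (ha : a < 0) (hp : p < 0)
    (X : ℝ → ℝ → ℝ × ℝ × ℝ)
    (hX : ∀ u v, X u v = (v,
        p * Real.exp (-2 * Real.sqrt (-2 * a) * u) + u + Real.sqrt (-a / 2) * v ^ 2 / 2,
        p * Real.exp (-2 * Real.sqrt (-2 * a) * u) - u + Real.sqrt (-a / 2) * v ^ 2 / 2)) :
    ¬ ∃ (c n : ℝ → ℝ × ℝ × ℝ) (U : Set (ℝ × ℝ)) (u v : ℝ × ℝ → ℝ),
        IsOpen U ∧ U.Nonempty ∧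
        ContDiffOn ℝ 2 u U ∧ ContDiffOn ℝ 2 v U ∧
        (∀ τ : ℝ, n τ ≠ 0) ∧
        (∀ q ∈ U, X (u q) (v q) = c q.1 + q.2 • n q.1) := by
  rintro ⟨c, n, U, u, v, hU, ⟨q0, hq0⟩, -, -, hn, hrep⟩
  obtain ⟨ε, hε, hball⟩ := Metric.isOpen_iff.mp hU q0 hq0
  set k := Real.sqrt (-2 * a) with hkdef
  set S := Real.sqrt (-a / 2) with hSdef
  have hkpos : 0 < k := Real.sqrt_pos.mpr (by linarith)
  have hSpos : 0 < S := Real.sqrt_pos.mpr (by linarith)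
  set τ := q0.1 with hτdef
  set s0 := q0.2 with hs0def
  set c1 := (c τ).1 with hc1def
  set c2 := (c τ).2.1 with hc2def
  set c3 := (c τ).2.2 with hc3def
  set n1 := (n τ).1 with hn1def
  set n2 := (n τ).2.1 with hn2def
  set n3 := (n τ).2.2 with hn3def
  set A := (c2 - c3) / 2 with hAdef
  set B := (n2 - n3) / 2 with hBdef
  have key : ∀ s : ℝ, (τ, s) ∈ U →
      p * Real.exp (-2 * k * (A + B * s)) + (A + B * s) + S * (c1 + s * n1) ^ 2 / 2
        = c2 + s * n2 := by
    intro s hs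
    have h1 := hrep (τ, s) hs
    rw [hX] at h1
    have hv : v (τ, s) = c1 + s * n1 := by
      have := congrArg Prod.fst h1
      simpa [Prod.fst_add, Prod.smul_fst, smul_eq_mul] using this
    have hb : p * Real.exp (-2 * k * u (τ, s)) + u (τ, s) + S * (v (τ, s)) ^ 2 / 2
        = c2 + s * n2 := by
      have := congrArg (fun z : ℝ × ℝ × ℝ => z.2.1) h1
      simpa [Prod.fst_add, Prod.snd_add, Prod.smul_fst, Prod.smul_snd, smul_eq_mul] using this
    have hc : p * Real.exp (-2 * k * u (τ, s)) - u (τ, s) + S * (v (τ, s)) ^ 2 / 2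
        = c3 + s * n3 := by
      have := congrArg (fun z : ℝ × ℝ × ℝ => z.2.2) h1
      simpa [Prod.fst_add, Prod.snd_add, Prod.smul_fst, Prod.smul_snd, smul_eq_mul] using this
    have hu : u (τ, s) = A + B * s := by
      rw [hAdef, hBdef]; linarith
    rw [hu, hv] at hb
    exact hb
  set δ := ε / 4 with hδdef
  have hδ : 0 < δ := by positivity
  have hmem : ∀ t : ℝ, 0 ≤ t → t ≤ 3 * δ → (τ, s0 + t) ∈ U := by
    intro t ht1 ht2
    apply hball
    have hd : dist ((τ, s0 + t) : ℝ × ℝ) q0 = t := by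
      rw [Prod.dist_eq]
      simp [Real.dist_eq, abs_of_nonneg ht1]
      rw [hτdef, hs0def]; simp [abs_of_nonneg ht1, ht1]
    rw [Metric.mem_ball, hd]
    linarith
  have m0 : ((τ, s0) : ℝ × ℝ) ∈ U := hq0
  set E0 := Real.exp (-2 * k * (A + B * s0)) with hE0def
  set r := Real.exp (-2 * k * B * δ) with hrdef
  have hE0 : 0 < E0 := Real.exp_pos _
  have k0 := key s0 m0
  have k1 := key (s0 + δ) (hmem δ hδ.le (by linarith))
  have k2 := key (s0 + 2 * δ) (hmem (2 * δ) (by linarith) (by linarith))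
  have k3 := key (s0 + 3 * δ) (hmem (3 * δ) (by linarith) le_rfl)
  have e1 : Real.exp (-2 * k * (A + B * (s0 + δ))) = E0 * r := by
    rw [hE0def, hrdef, ← Real.exp_add]; congr 1; ring
  have e2 : Real.exp (-2 * k * (A + B * (s0 + 2 * δ))) = E0 * r * r := by
    rw [hE0def, hrdef, ← Real.exp_add, ← Real.exp_add]; congr 1; ring
  have e3 : Real.exp (-2 * k * (A + B * (s0 + 3 * δ))) = E0 * r * r * r := by
    rw [hE0def, hrdef, ← Real.exp_add, ← Real.exp_add, ← Real.exp_add]; congr 1; ring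
  rw [e1] at k1
  rw [e2] at k2
  rw [e3] at k3
  have hcube : p * E0 * (r - 1) ^ 3 = 0 := by
    linear_combination k3 - 3 * k2 + 3 * k1 - k0
  have hpE0 : p * E0 ≠ 0 := (mul_neg_of_neg_of_pos hp hE0).ne
  have h3 : (r - 1) ^ 3 = 0 := (mul_eq_zero.mp hcube).resolve_left hpE0
  have hr1 : r = 1 := by
    have := pow_eq_zero_iff (n := 3) (by norm_num) |>.mp h3
    linarith
  have hB : B = 0 := by
    have h : -2 * k * B * δ = 0 := by
      apply Real.exp_injective
      rw [← hrdef, hr1, Real.exp_zero]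
    have h' : (-2 : ℝ) = 0 ∨ k = 0 ∨ B = 0 ∨ δ = 0 := by
      rcases mul_eq_zero.mp h with h4 | h4
      · rcases mul_eq_zero.mp h4 with h5 | h5
        · rcases mul_eq_zero.mp h5 with h6 | h6
          · exact Or.inl h6
          · exact Or.inr (Or.inl h6)
        · exact Or.inr (Or.inr (Or.inl h5))
      · exact Or.inr (Or.inr (Or.inr h4))
    rcases h' with h4 | h4 | h4 | h4
    · norm_num at h4
    · exact absurd h4 hkpos.ne'
    · exact h4
    · exact absurd h4 hδ.ne'
  rw [← hE0def] at k0
  rw [hB] at k0 k1 k2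
  rw [hr1] at k1 k2
  have hq : S * n1 ^ 2 * δ ^ 2 = 0 := by
    linear_combination k0 - 2 * k1 + k2
  have hn1z : n1 = 0 := by
    have h5 : n1 ^ 2 = 0 := by
      rcases mul_eq_zero.mp hq with h6 | h6
      · rcases mul_eq_zero.mp h6 with h7 | h7
        · exact absurd h7 hSpos.ne'
        · exact h7
      · exact absurd (pow_eq_zero_iff (n := 2) (by norm_num) |>.mp h6) hδ.ne'
    exact pow_eq_zero_iff (n := 2) (by norm_num) |>.mp h5
  rw [hn1z] at k0 k1
  have hn2z : n2 = 0 := by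
    have h6 : n2 * δ = 0 := by linear_combination k0 - k1
    rcases mul_eq_zero.mp h6 with h7 | h7
    · exact h7
    · exact absurd h7 hδ.ne'
  have hn3z : n3 = 0 := by
    have := hBdef
    rw [hB] at this
    linarith [this]
  exact hn τ (by
    have : n τ = ((n τ).1, (n τ).2.1, (n τ).2.2) := rfl
    rw [this, ← hn1def, ← hn2def, ← hn3def, hn1z, hn2z, hn3z]
    rfl)
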